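/- Let α, β, γ ∈ ℂ, and let u, y : ℝ → ℤ → ℂ with u differentiable in the variable ξ, and suppose yₙ + yₙ₋₁ ≠ 0 for all n. For λ ∈ ℂ \ {0, α} define Lₙ = [[1, −uₙ/λ], [1, 0]] and Yₙ = (1/(λ−α))·[[−αyₙ − (−1)ⁿβ/2, (αyₙ² + (−1)ⁿβyₙ + γ)/(yₙ + yₙ₋₁)], [−λ(yₙ + yₙ₋₁), λ(yₙ + yₙ₋₁) − αyₙ₋₁ + (−1)ⁿβ/2]]. Then the following are equivalent: (i) for all n and all λ ∈ ℂ \ {0, α}, ∂_ξLₙ = Yₙ₊₁Lₙ − LₙYₙ; (ii) for all n, ∂_ξuₙ = uₙ(yₙ₊₁ − yₙ₋₁) and uₙ(yₙ₊₁ + yₙ)(yₙ + yₙ₋₁) = αyₙ² + (−1)ⁿβyₙ + γ. -/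

import Mathlib

attribute [local instance] Matrix.normedAddCommGroup Matrix.normedSpace

lemma derivL (u : ℝ → ℂ) (hu : Differentiable ℝ u) (lam : ℂ) (ξ : ℝ) :
    deriv (fun t => !![(1:ℂ), -u t / lam; 1, 0]) ξ
      = !![0, -deriv u ξ / lam; 0, 0] := by
  have h : ∀ t, !![(1:ℂ), -u t / lam; 1, 0]
      = !![(1:ℂ), 0; 1, 0] + u t • !![0, -lam⁻¹; 0, 0] := by
    intro t; ext i j; fin_cases i <;> fin_cases j <;> simp [div_eq_mul_inv]
  have hd : HasDerivAt (fun t => !![(1:ℂ), -u t / lam; 1, 0])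
      (deriv u ξ • !![(0:ℂ), -lam⁻¹; 0, 0]) ξ := by
    simp_rw [h]
    exact (((hu ξ).hasDerivAt).smul_const _).const_add _
  refine hd.deriv.trans ?_
  ext i j; fin_cases i <;> fin_cases j <;> simp [div_eq_mul_inv]

set_option maxHeartbeats 1000000 in
/-- the negative flow `∂_ξuₙ = uₙ(yₙ₊₁ − yₙ₋₁)` together with the
constraint `uₙ(yₙ₊₁ + yₙ)(yₙ + yₙ₋₁) = αyₙ² + (−1)ⁿβyₙ + γ` is equivalent to
the zero curvature equation `∂_ξLₙ = Yₙ₊₁Lₙ − LₙYₙ`. -/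
theorem volterra_negative_flow_zero_curvature
    (α β γ : ℂ) (u y : ℝ → ℤ → ℂ)
    (hdiff : ∀ n : ℤ, Differentiable ℝ (fun ξ => u ξ n))
    (hden : ∀ (ξ : ℝ) (n : ℤ), y ξ n + y ξ (n - 1) ≠ 0)
    (L Y : ℝ → ℤ → ℂ → Matrix (Fin 2) (Fin 2) ℂ)
    (hL : ∀ (ξ : ℝ) (n : ℤ) (lam : ℂ), L ξ n lam = !![1, -u ξ n / lam; 1, 0])
    (hY : ∀ (ξ : ℝ) (n : ℤ) (lam : ℂ), Y ξ n lam = (lam - α)⁻¹ •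
      !![-α * y ξ n - (-1 : ℂ) ^ n * β / 2,
           (α * (y ξ n) ^ 2 + (-1 : ℂ) ^ n * β * y ξ n + γ) / (y ξ n + y ξ (n - 1));
         -lam * (y ξ n + y ξ (n - 1)),
           lam * (y ξ n + y ξ (n - 1)) - α * y ξ (n - 1) + (-1 : ℂ) ^ n * β / 2]) :
    (∀ (ξ : ℝ) (n : ℤ) (lam : ℂ), lam ≠ 0 → lam ≠ α →
        deriv (fun ξ => L ξ n lam) ξ
          = Y ξ (n + 1) lam * L ξ n lam - L ξ n lam * Y ξ n lam)
    ↔ (∀ (ξ : ℝ) (n : ℤ),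
        deriv (fun ξ => u ξ n) ξ = u ξ n * (y ξ (n + 1) - y ξ (n - 1))
        ∧ u ξ n * (y ξ (n + 1) + y ξ n) * (y ξ n + y ξ (n - 1))
            = α * (y ξ n) ^ 2 + (-1 : ℂ) ^ n * β * y ξ n + γ) := by
  have hLfun : ∀ (n : ℤ) (lam : ℂ), (fun ξ => L ξ n lam) = fun ξ => !![(1:ℂ), -u ξ n / lam; 1, 0] :=
    fun n lam => funext fun t => hL t n lam
  have hpow : ∀ n : ℤ, (-1:ℂ)^(n+1) = -(-1:ℂ)^n := by
    intro n; rw [zpow_add_one₀ (by norm_num : (-1:ℂ) ≠ 0)]; ring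
  have hsub : ∀ n : ℤ, n + 1 - 1 = n := fun n => add_sub_cancel_right n 1
  constructor
  · intro h ξ n
    obtain ⟨lam, hl0, hla⟩ : ∃ lam : ℂ, lam ≠ 0 ∧ lam ≠ α := by
      rcases eq_or_ne α 1 with h1 | h1
      · exact ⟨2, by norm_num, by rw [h1]; norm_num⟩
      · exact ⟨1, one_ne_zero, fun he => h1 he.symm⟩
    have hlα : lam - α ≠ 0 := sub_ne_zero.2 hla
    have heq := h ξ n lam hl0 hla
    rw [hLfun n lam, derivL _ (hdiff n) lam ξ, hY, hY, hL, hsub, hpow] at heq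
    have hbc := hden ξ n
    have hab := hden ξ (n+1)
    rw [hsub] at hab
    set a := y ξ (n+1) with ha
    set b := y ξ n with hb
    set c := y ξ (n-1) with hc
    set U := u ξ n with hU
    set d := deriv (fun ξ => u ξ n) ξ with hd
    set e := (-1:ℂ)^n with he
    -- extract entries
    have h22 : (!![(0:ℂ), -d / lam; 0, 0] : Matrix (Fin 2) (Fin 2) ℂ) 1 1 = _ := congrFun (congrFun heq 1) 1
    have h12 : (!![(0:ℂ), -d / lam; 0, 0] : Matrix (Fin 2) (Fin 2) ℂ) 0 1 = _ := congrFun (congrFun heq 0) 1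
    simp [Matrix.mul_apply, Fin.sum_univ_two] at h22 h12
    field_simp at h22 h12
    have hcon : U * (a + b) * (b + c) = α * b ^ 2 + e * β * b + γ := by
      have h0 : (lam - α) * lam *
          (U * (a + b) * (b + c) - (α * b ^ 2 + e * β * b + γ)) = 0 := by
        linear_combination -(lam - α) * lam * h22
      have h1 := (mul_eq_zero.mp h0).resolve_left (mul_ne_zero hlα hl0)
      linear_combination h1
    refine ⟨?_, hcon⟩
    have hD : ((lam - α) * 2 * lam * ((lam - α) * (b + c) * (lam * ((lam - α) * 2)))) ≠ 0 :=
      mul_ne_zero (mul_ne_zero (mul_ne_zero hlα two_ne_zero) hl0)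
        (mul_ne_zero (mul_ne_zero hlα hbc) (mul_ne_zero hl0 (mul_ne_zero hlα two_ne_zero)))
    have hK : 4 * lam ^ 2 * (lam - α) ^ 3 * (b + c) * (U * (a - c) - d) = 0 := by
      linear_combination 2 * lam ^ 2 * (lam - α) ^ 2 * h12 + 4 * lam ^ 3 * (lam - α) ^ 2 * hcon
    have hne : (4 : ℂ) * lam ^ 2 * (lam - α) ^ 3 * (b + c) ≠ 0 :=
      mul_ne_zero (mul_ne_zero (mul_ne_zero (by norm_num) (pow_ne_zero _ hl0))
        (pow_ne_zero _ hlα)) hbc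
    have h2 := (mul_eq_zero.mp hK).resolve_left hne
    linear_combination -h2
  · intro h ξ n lam hl0 hla
    have hlα : lam - α ≠ 0 := sub_ne_zero.2 hla
    obtain ⟨hflow, hcon⟩ := h ξ n
    have hbc := hden ξ n
    have hab := hden ξ (n+1)
    rw [hsub] at hab
    rw [hLfun n lam, derivL _ (hdiff n) lam ξ, hY, hY, hL, hsub, hpow]
    set a := y ξ (n+1) with ha
    set b := y ξ n with hb
    set c := y ξ (n-1) with hc
    set U := u ξ n with hU
    set d := deriv (fun ξ => u ξ n) ξ with hd
    set e := (-1:ℂ)^n with he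
    have hγ : γ = U * (a + b) * (b + c) - α * b ^ 2 - e * β * b := by
      linear_combination -hcon
    have hD2 : (lam - α) * 2 * lam * ((lam - α) * (lam * ((lam - α) * 2))) ≠ 0 :=
      mul_ne_zero (mul_ne_zero (mul_ne_zero hlα two_ne_zero) hl0)
        (mul_ne_zero hlα (mul_ne_zero hl0 (mul_ne_zero hlα two_ne_zero)))
    ext i j
    fin_cases i <;> fin_cases j <;>
      (simp [Matrix.mul_apply, Fin.sum_univ_two]
       try simp only [hflow, hγ]
       try field_simp [hl0, hlα, hbc, hab]
       try rw [eq_div_iff hD2]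
       try ring)
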